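/- Under the setting of the previous expansion, the value of $\beta$ minimizing $\mathbb{E}\|C - \beta C_m\|_F^2$ is $\beta^* = \frac{M_1 + 2M_2}{M_1 + 2M_2\frac{m-1}{K-1}}$, provided the denominator is positive, where $M_1 = \sum_{j=1}^K \|A_jB_j\|_F^2$ and $M_2 = \sum_{j<j'}\mathrm{Tr}((A_jB_j)^T(A_{j'}B_{j'}))$, using the identity $\|C\|_F^2 = M_1 + 2M_2$. -/

import Mathlib

open Finset

set_option maxHeartbeats 1000000

lemma sumA {n : ℕ} (g : Fin (n+1) → ℝ) (k : Fin (n+1)) :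
    ∑ σ : Equiv.Perm (Fin (n+1)), g (σ k) = (n.factorial : ℝ) * ∑ j, g j := by
  have h1 : ∑ σ : Equiv.Perm (Fin (n+1)), g (σ k)
      = ∑ σ : Equiv.Perm (Fin (n+1)), g (σ 0) := by
    rw [← Equiv.sum_comp (Equiv.mulRight (Equiv.swap (0 : Fin (n+1)) k))
      (fun σ : Equiv.Perm (Fin (n+1)) => g (σ 0))]
    exact Finset.sum_congr rfl fun σ _ => by simp [Equiv.Perm.mul_apply]
  rw [h1, ← Equiv.sum_comp (Equiv.Perm.decomposeFin (n := n)).symm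
      (fun σ : Equiv.Perm (Fin (n+1)) => g (σ 0))]
  rw [Fintype.sum_prod_type]
  simp only [Equiv.Perm.decomposeFin_symm_apply_zero]
  simp [Finset.sum_const, Fintype.card_perm, Finset.mul_sum]

lemma sumB {n : ℕ} (g : Fin (n+2) → Fin (n+2) → ℝ) (k k' : Fin (n+2)) (hkk : k ≠ k') :
    ∑ σ : Equiv.Perm (Fin (n+2)), g (σ k) (σ k')
      = (n.factorial : ℝ) * ∑ p, ((∑ j, g p j) - g p p) := by
  obtain ⟨τ, h0, h1⟩ : ∃ τ : Equiv.Perm (Fin (n+2)), τ 0 = k ∧ τ 1 = k' := by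
    refine ⟨Equiv.swap (Equiv.swap 0 k 1) k' * Equiv.swap 0 k, ?_, ?_⟩
    · have hne1 : k ≠ Equiv.swap 0 k 1 := by
        intro h
        have := congrArg (Equiv.swap (0 : Fin (n+2)) k) h
        simp at this
      simp only [Equiv.Perm.mul_apply, Equiv.swap_apply_left]
      exact Equiv.swap_apply_of_ne_of_ne hne1 hkk
    · simp [Equiv.Perm.mul_apply]
  have h2 : ∑ σ : Equiv.Perm (Fin (n+2)), g (σ k) (σ k')
      = ∑ σ : Equiv.Perm (Fin (n+2)), g (σ 0) (σ 1) := by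
    rw [← Equiv.sum_comp (Equiv.mulRight τ)
      (fun σ : Equiv.Perm (Fin (n+2)) => g (σ 0) (σ 1))]
    exact Finset.sum_congr rfl fun σ _ => by simp [Equiv.Perm.mul_apply, h0, h1]
  rw [h2, ← Equiv.sum_comp (Equiv.Perm.decomposeFin (n := n+1)).symm
      (fun σ : Equiv.Perm (Fin (n+2)) => g (σ 0) (σ 1))]
  rw [Fintype.sum_prod_type]
  simp only [Equiv.Perm.decomposeFin_symm_apply_zero,
    Equiv.Perm.decomposeFin_symm_apply_one]
  have h3 : ∀ p : Fin (n+2),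
      (∑ e : Equiv.Perm (Fin (n+1)), g p (Equiv.swap 0 p (e 0).succ))
      = (n.factorial : ℝ) * ((∑ j, g p j) - g p p) := by
    intro p
    rw [sumA (fun i => g p (Equiv.swap 0 p i.succ)) 0]
    congr 1
    have h4 : ∑ j : Fin (n+2), g p (Equiv.swap 0 p j) = ∑ j, g p j :=
      Equiv.sum_comp (Equiv.swap 0 p) (fun j => g p j)
    rw [← h4]
    conv_rhs => rw [Fin.sum_univ_succ]
    simp [Equiv.swap_apply_left]
  rw [Finset.sum_congr rfl fun p _ => h3 p, ← Finset.mul_sum]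

lemma quadmin (Ninv Nc A c denom β : ℝ) (hN : 0 ≤ Ninv) (hA : 0 ≤ A) (hd : 0 < denom) :
    Ninv * (Nc - 2*(c/denom)*(A*c) + (c/denom)^2*(A*denom))
      ≤ Ninv * (Nc - 2*β*(A*c) + β^2*(A*denom)) := by
  apply mul_le_mul_of_nonneg_left ?_ hN
  have hd' : denom ≠ 0 := ne_of_gt hd
  have key : (Nc - 2*β*(A*c) + β^2*(A*denom)) - (Nc - 2*(c/denom)*(A*c) + (c/denom)^2*(A*denom))
      = (A/denom) * (denom*β - c)^2 := by field_simp; ring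
  nlinarith [mul_nonneg (div_nonneg hA hd.le) (sq_nonneg (denom*β - c))]


/-- The optimal scaling `β* = (M₁ + 2M₂)/(M₁ + 2M₂ (m-1)/(K-1))` minimizes the
expected squared Frobenius error `E‖C - β C_m‖_F²` over `β ∈ ℝ`, provided the
denominator is positive. -/
theorem stmt5 (K m p q : ℕ) (hK : 2 ≤ K) (hm : 1 ≤ m) (hmK : m ≤ K)
    (M : Fin K → Matrix (Fin p) (Fin q) ℝ) :
    let inner : Matrix (Fin p) (Fin q) ℝ → Matrix (Fin p) (Fin q) ℝ → ℝ :=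
      fun X Y => ∑ a, ∑ b, X a b * Y a b
    let C : Matrix (Fin p) (Fin q) ℝ := ∑ j, M j
    let M1 : ℝ := ∑ j, inner (M j) (M j)
    let M2 : ℝ := ∑ j : Fin K, ∑ j' : Fin K, if j < j' then inner (M j) (M j') else 0
    let Cm : Equiv.Perm (Fin K) → Matrix (Fin p) (Fin q) ℝ :=
      fun σ => ∑ k ∈ Finset.univ.filter (fun k : Fin K => (k : ℕ) < m), M (σ k)
    let f : ℝ → ℝ := fun β =>
      (Nat.factorial K : ℝ)⁻¹ *
        ∑ σ : Equiv.Perm (Fin K), inner (C - β • Cm σ) (C - β • Cm σ)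
    let denom : ℝ := M1 + 2 * M2 * (((m : ℝ) - 1) / ((K : ℝ) - 1))
    0 < denom → ∀ β : ℝ, f ((M1 + 2 * M2) / denom) ≤ f β := by
  obtain ⟨n, rfl⟩ : ∃ n, K = n + 2 := ⟨K - 2, by omega⟩
  intro inner C M1 M2 Cm f denom hdenom β
  set t : Fin (n+2) → Fin (n+2) → ℝ := fun j j' => inner (M j) (M j') with ht
  set S : Finset (Fin (n+2)) := Finset.univ.filter (fun k : Fin (n+2) => (k : ℕ) < m) with hSdef
  -- basic facts
  have hsymm : ∀ X Y : Matrix (Fin p) (Fin q) ℝ, inner X Y = inner Y X := fun X Y =>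
    Finset.sum_congr rfl fun a _ => Finset.sum_congr rfl fun b _ => mul_comm _ _
  have hsum2 : ∀ (s : Finset (Fin (n+2))) (F : Fin (n+2) → Matrix (Fin p) (Fin q) ℝ)
      (X : Matrix (Fin p) (Fin q) ℝ),
      inner X (∑ j ∈ s, F j) = ∑ j ∈ s, inner X (F j) := by
    intro s F X
    simp only [inner, Matrix.sum_apply, Finset.mul_sum]
    calc ∑ a, ∑ b, ∑ j ∈ s, X a b * F j a b
        = ∑ a, ∑ j ∈ s, ∑ b, X a b * F j a b :=
          Finset.sum_congr rfl fun a _ => Finset.sum_comm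
      _ = ∑ j ∈ s, ∑ a, ∑ b, X a b * F j a b := Finset.sum_comm
  have hcard : S.card = m := by
    have he : S = Finset.attachFin (Finset.range m)
        (fun a ha => lt_of_lt_of_le (Finset.mem_range.mp ha) hmK) := by
      ext a
      simp [hSdef, Finset.mem_attachFin]
    rw [he, Finset.card_attachFin, Finset.card_range]
  have hCCsum : inner C C = ∑ j, ∑ j', t j j' := by
    have e0 : inner C C = ∑ x, inner C (M x) := hsum2 univ M C
    have e1 : ∀ x, inner C (M x) = ∑ j, t j x := fun x =>
      (hsymm C (M x)).trans ((hsum2 univ M (M x)).trans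
        (Finset.sum_congr rfl fun j _ => hsymm (M x) (M j)))
    exact e0.trans ((Finset.sum_congr rfl fun x _ => e1 x).trans Finset.sum_comm)
  have htrace : (∑ p : Fin (n+2), t p p) = M1 := rfl
  have hCC : inner C C = M1 + 2*M2 := by
    have hsplit : ∀ j j' : Fin (n+2), t j j' =
        (if j = j' then t j j' else 0) +
          ((if j < j' then t j j' else 0) + (if j' < j then t j j' else 0)) := by
      intro j j'
      rcases lt_trichotomy j j' with h|h|h
      · simp [h, h.ne, h.asymm]
      · simp [h]
      · simp [h, h.ne', h.asymm]
    have e1 : (∑ j : Fin (n+2), ∑ j', if j = j' then t j j' else 0) = M1 := by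
      simp [Finset.sum_ite_eq]
      exact htrace
    have e2 : (∑ j : Fin (n+2), ∑ j', if j' < j then t j j' else 0) = M2 := by
      rw [Finset.sum_comm]
      refine Finset.sum_congr rfl fun a _ => Finset.sum_congr rfl fun b _ => ?_
      by_cases h : a < b <;> simp [h, ht, hsymm (M b) (M a)]
    have e3 : (∑ j : Fin (n+2), ∑ j', if j < j' then t j j' else 0) = M2 := rfl
    calc inner C C = ∑ j, ∑ j', t j j' := hCCsum
      _ = (∑ j : Fin (n+2), ∑ j', if j = j' then t j j' else 0)
          + ((∑ j : Fin (n+2), ∑ j', if j < j' then t j j' else 0)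
            + (∑ j : Fin (n+2), ∑ j', if j' < j then t j j' else 0)) := by
          simp only [← Finset.sum_add_distrib]
          exact Finset.sum_congr rfl fun j _ => Finset.sum_congr rfl fun j' _ => hsplit j j'
      _ = M1 + 2*M2 := by rw [e1, e2, e3]; ring
  have hexp : ∀ (b : ℝ) (Y : Matrix (Fin p) (Fin q) ℝ),
      inner (C - b • Y) (C - b • Y)
        = inner C C - 2*b*inner C Y + b^2*inner Y Y := by
    intro b Y
    have hr : ∀ x y : ℝ, (x - b*y)*(x - b*y) = x*x - 2*b*(x*y) + b^2*(y*y) := fun x y => by ring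
    simp only [inner, Matrix.sub_apply, Matrix.smul_apply, smul_eq_mul, hr,
      Finset.mul_sum, Finset.sum_add_distrib, Finset.sum_sub_distrib]
  set G1 : ℝ := ∑ σ : Equiv.Perm (Fin (n+2)), inner C (Cm σ) with hG1def
  set G2 : ℝ := ∑ σ : Equiv.Perm (Fin (n+2)), inner (Cm σ) (Cm σ) with hG2def
  have hfval : ∀ b : ℝ, f b = (((n+2).factorial : ℝ))⁻¹ *
      (((n+2).factorial : ℝ) * inner C C - 2*b*G1 + b^2*G2) := by
    intro b
    show (((n+2).factorial : ℝ))⁻¹ * ∑ σ : Equiv.Perm (Fin (n+2)),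
        inner (C - b • Cm σ) (C - b • Cm σ) = _
    congr 1
    calc ∑ σ : Equiv.Perm (Fin (n+2)), inner (C - b • Cm σ) (C - b • Cm σ)
        = ∑ σ : Equiv.Perm (Fin (n+2)),
            (inner C C - 2*b*inner C (Cm σ) + b^2*inner (Cm σ) (Cm σ)) :=
          Finset.sum_congr rfl fun σ _ => hexp b (Cm σ)
      _ = _ := by
          rw [Finset.sum_add_distrib, Finset.sum_sub_distrib, Finset.sum_const,
            ← Finset.mul_sum, ← Finset.mul_sum, Finset.card_univ, Fintype.card_perm,
            Fintype.card_fin, nsmul_eq_mul, hG1def, hG2def]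
  -- G1
  have hG1val : G1 = ((m:ℝ) * ((n+1).factorial : ℝ)) * (M1 + 2*M2) := by
    calc G1 = ∑ σ : Equiv.Perm (Fin (n+2)), ∑ k ∈ S, inner C (M (σ k)) := by
          rw [hG1def]
          exact Finset.sum_congr rfl fun σ _ => hsum2 S (fun k => M (σ k)) C
      _ = ∑ k ∈ S, ∑ σ : Equiv.Perm (Fin (n+2)), inner C (M (σ k)) := Finset.sum_comm
      _ = ∑ k ∈ S, ((n+1).factorial : ℝ) * ∑ j, inner C (M j) :=
          Finset.sum_congr rfl fun k _ => sumA (n := n+1) (fun j => inner C (M j)) k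
      _ = ∑ k ∈ S, ((n+1).factorial : ℝ) * inner C C :=
          Finset.sum_congr rfl fun k _ => by rw [← hsum2 univ M C]
      _ = ((m:ℝ) * ((n+1).factorial : ℝ)) * (M1 + 2*M2) := by
          rw [Finset.sum_const, hcard, nsmul_eq_mul, hCC]; ring
  -- G2
  have hG2raw : G2 = (m:ℝ) * ((n+1).factorial : ℝ) * M1
      + (m:ℝ)*((m:ℝ)-1) * ((n.factorial : ℝ) * (2*M2)) := by
    have hstep : ∀ (k k' : Fin (n+2)),
        (∑ σ : Equiv.Perm (Fin (n+2)), t (σ k) (σ k'))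
          = if k = k' then ((n+1).factorial : ℝ) * M1 else (n.factorial : ℝ) * (2*M2) := by
      intro k k'
      by_cases h : k = k'
      · subst h
        rw [if_pos rfl]
        exact sumA (n := n+1) (fun j => t j j) k
      · rw [if_neg h]
        refine (sumB t k k' h).trans ?_
        congr 1
        rw [Finset.sum_sub_distrib, ← hCCsum, hCC, htrace]
        ring
    calc G2 = ∑ σ : Equiv.Perm (Fin (n+2)), ∑ k' ∈ S, ∑ k ∈ S, t (σ k) (σ k') := by
          rw [hG2def]
          refine Finset.sum_congr rfl fun σ _ => ?_
          rw [hsum2 S (fun k => M (σ k)) (Cm σ)]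
          refine Finset.sum_congr rfl fun k' _ => ?_
          rw [hsymm, hsum2 S (fun k => M (σ k)) (M (σ k'))]
          exact Finset.sum_congr rfl fun k _ => hsymm _ _
      _ = ∑ k' ∈ S, ∑ k ∈ S, ∑ σ : Equiv.Perm (Fin (n+2)), t (σ k) (σ k') := by
          rw [Finset.sum_comm]
          exact Finset.sum_congr rfl fun k' _ => Finset.sum_comm
      _ = ∑ k' ∈ S, ∑ k ∈ S,
            (if k = k' then ((n+1).factorial : ℝ) * M1 else (n.factorial : ℝ) * (2*M2)) :=
          Finset.sum_congr rfl fun k' _ => Finset.sum_congr rfl fun k _ => hstep k k'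
      _ = ∑ k' ∈ S, (((n+1).factorial : ℝ) * M1
            + ((m:ℝ)-1) * ((n.factorial : ℝ) * (2*M2))) := by
          refine Finset.sum_congr rfl fun k' hk' => ?_
          have hsplit2 : ∀ k : Fin (n+2),
              (if k = k' then ((n+1).factorial : ℝ) * M1 else (n.factorial : ℝ) * (2*M2))
              = (n.factorial : ℝ) * (2*M2)
                + (if k = k' then ((n+1).factorial : ℝ) * M1 - (n.factorial : ℝ) * (2*M2) else 0) := by
            intro k; by_cases h : k = k' <;> simp [h]
          simp only [hsplit2]
          rw [Finset.sum_add_distrib, Finset.sum_const, hcard,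
            Finset.sum_ite_eq' S k', if_pos hk', nsmul_eq_mul]
          ring
      _ = (m:ℝ) * ((n+1).factorial : ℝ) * M1
            + (m:ℝ)*((m:ℝ)-1) * ((n.factorial : ℝ) * (2*M2)) := by
          rw [Finset.sum_const, hcard, nsmul_eq_mul]; ring
  have hG2val : G2 = ((m:ℝ) * ((n+1).factorial : ℝ)) * denom := by
    rw [hG2raw]
    have hden : denom = M1 + 2 * M2 * (((m:ℝ) - 1) / ((n:ℝ)+1)) := by
      have : ((↑(n+2) : ℝ) - 1) = (n:ℝ)+1 := by push_cast; ring
      rw [show denom = M1 + 2 * M2 * (((m:ℝ) - 1) / ((↑(n+2):ℝ) - 1)) from rfl, this]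
    rw [hden]
    have hfac : (((n+1).factorial : ℝ)) = ((n:ℝ)+1) * (n.factorial : ℝ) := by
      rw [Nat.factorial_succ]; push_cast; ring
    have hne : ((n:ℝ)+1) ≠ 0 := by positivity
    rw [hfac]
    field_simp
  -- finish
  rw [hfval, hfval, hCC, hG1val, hG2val]
  exact quadmin _ _ _ _ _ _ (by positivity) (by positivity) hdenom
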